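/- Let p, q ≥ 2 be coprime integers, r, s integers with ps − qr = 1, (α, β) an admissible pair, and (k⁻, k⁺) bifurcation parameters associated to (α, β). Then sin²(πk⁺/p) = sin²(απ/p) and sin²(πk⁺/q) = sin²(βπ/q); in particular (4/(pq))²·sin²(πk⁺/p)·sin²(πk⁺/q) = (16/(p²q²))·sin²(απ/p)·sin²(βπ/q). -/

import Mathlib

/-- A pair `(a, b)` is admissible for `(p, q)` if `1 ≤ a ≤ p-1`, `1 ≤ b ≤ q-1`
and `a ≡ b (mod 2)`. -/
def Admissible (p q a b : ℤ) : Prop :=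
  1 ≤ a ∧ a ≤ p - 1 ∧ 1 ≤ b ∧ b ≤ q - 1 ∧ Int.ModEq 2 a b

/-- `(km, kp)` are bifurcation parameters associated to the admissible pair `(a, b)`:
`0 < km < kp < pq` and, for some signs `e, em, ep ∈ {±1}`,
`km ≡ em (b p s - e a q r) (mod pq)` and `kp ≡ ep (b p s + e a q r) (mod pq)`. -/
def BifParams (p q r s a b km kp : ℤ) : Prop :=
  0 < km ∧ km < kp ∧ kp < p * q ∧
    ∃ e em ep : ℤ, (e = 1 ∨ e = -1) ∧ (em = 1 ∨ em = -1) ∧ (ep = 1 ∨ ep = -1) ∧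
      Int.ModEq (p * q) km (em * (b * p * s - e * a * q * r)) ∧
      Int.ModEq (p * q) kp (ep * (b * p * s + e * a * q * r))

open Real in
lemma sin_sq_add_int_mul_pi (x : ℝ) (n : ℤ) : Real.sin (x + n * π) ^ 2 = Real.sin x ^ 2 := by
  rw [Real.sin_add_int_mul_pi, mul_pow]
  have : ((-1 : ℝ) ^ n) ^ 2 = 1 := by
    rcases Int.even_or_odd n with h | h
    · rw [h.neg_one_zpow]; norm_num
    · rw [h.neg_one_zpow]; norm_num
  rw [this, one_mul]

open Real in
/-- If `k ≡ ε a (mod p)` with `ε = ±1` and `p ≠ 0`, then `sin²(πk/p) = sin²(aπ/p)`. -/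
lemma sin_sq_of_modeq (p k a ε : ℤ) (hp : (p : ℝ) ≠ 0) (hε : ε = 1 ∨ ε = -1)
    (h : Int.ModEq p k (ε * a)) :
    Real.sin (π * k / p) ^ 2 = Real.sin (a * π / p) ^ 2 := by
  obtain ⟨t, ht⟩ := (Int.modEq_iff_dvd.mp h.symm)
  have hk : (k : ℝ) = ε * a + p * t := by
    have : k = ε * a + p * t := by linarith [ht]
    exact_mod_cast congrArg (Int.cast : ℤ → ℝ) this
  have hx : π * k / p = (ε : ℝ) * (a * π / p) + t * π := by
    rw [hk]; field_simp
  rw [hx, sin_sq_add_int_mul_pi]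
  rcases hε with h1 | h1 <;> subst h1 <;> push_cast <;> simp [Real.sin_neg, neg_mul]

open Real in
/-- `sin²(πk⁺/p) = sin²(απ/p)` and `sin²(πk⁺/q) = sin²(βπ/q)`; in particular the
squared residue of the abelian torsion equals the non-abelian torsion value
`(16/(p²q²)) sin²(απ/p) sin²(βπ/q)`. -/
theorem residue_squared_eq_torsion (p q r s : ℤ) (hp : 2 ≤ p) (hq : 2 ≤ q)
    (hpq : IsCoprime p q) (hrs : p * s - q * r = 1) (α β km kp : ℤ)
    (hadm : Admissible p q α β) (hbif : BifParams p q r s α β km kp) :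
    Real.sin (π * kp / p) ^ 2 = Real.sin (α * π / p) ^ 2 ∧
    Real.sin (π * kp / q) ^ 2 = Real.sin (β * π / q) ^ 2 ∧
    (4 / ((p : ℝ) * q)) ^ 2 * (Real.sin (π * kp / p) ^ 2 * Real.sin (π * kp / q) ^ 2)
      = 16 / ((p : ℝ) ^ 2 * (q : ℝ) ^ 2) *
          (Real.sin (α * π / p) ^ 2 * Real.sin (β * π / q) ^ 2) := by
  obtain ⟨-, -, -, e, em, ep, he, -, hep, -, hkp⟩ := hbif
  have hpR : (p : ℝ) ≠ 0 := by positivity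
  have hqR : (q : ℝ) ≠ 0 := by positivity
  -- mod p
  have hmodp : Int.ModEq p kp ((-ep * e) * α) := by
    have h1 : Int.ModEq p kp (ep * (β * p * s + e * α * q * r)) :=
      hkp.of_dvd ⟨q, rfl⟩
    refine h1.trans (Int.modEq_iff_dvd.mpr ⟨-(ep * β * s + ep * e * α * s), ?_⟩)
    linear_combination (ep * e * α) * hrs
  have hmodq : Int.ModEq q kp (ep * β) := by
    have h1 : Int.ModEq q kp (ep * (β * p * s + e * α * q * r)) :=
      hkp.of_dvd ⟨p, mul_comm p q⟩
    refine h1.trans (Int.modEq_iff_dvd.mpr ⟨-(ep * β * r + ep * e * α * r), ?_⟩)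
    linear_combination (-(ep * β)) * hrs
  have hsign : -ep * e = 1 ∨ -ep * e = -1 := by
    rcases he with h1 | h1 <;> rcases hep with h2 | h2 <;> subst h1 <;> subst h2 <;> norm_num
  have e1 := sin_sq_of_modeq p kp α (-ep * e) hpR hsign hmodp
  have e2 := sin_sq_of_modeq q kp β ep hqR hep hmodq
  refine ⟨e1, e2, ?_⟩
  rw [e1, e2, div_pow, mul_pow]
  norm_num
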